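/- There exists a universal constant C > 0 such that the following holds. Let n ≥ 2, let Q be an n × n real matrix with nonnegative entries whose row sums are all at most 1, let δ ∈ (0, 1] and 0 < m ≤ n be real numbers, and suppose that ‖Q‖ ≤ 1 − δm/n and that for every natural number t and all indices s, x one has (Qᵗ)_{s,x} ≤ 1/n + (1−δ)ᵗ. Then for every index s: Σ_{t≥0} Σ_x (Qᵗ)_{s,x} ≤ C ( (log n)/δ + n/(δ m) ). (This is the matrix form of the hitting-time bound HT_s ∈ O(n/m + log n) on expanders, since HT_s = Σ_{t,x} (Qᵗ)_{s,x} for the killed walk matrix Q.) -/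

import Mathlib

open scoped BigOperators

/-- Hitting-time bound on expanders, in matrix form: there is a universal constant
`C > 0` such that for any substochastic nonnegative `Q` with `‖Q‖ ≤ 1 − δm/n` and
`(Qᵗ)_{s,x} ≤ 1/n + (1−δ)ᵗ`, one has `Σ_{t≥0} Σ_x (Qᵗ)_{s,x} ≤ C(log n/δ + n/(δm))`. -/
theorem stmt18 :
    ∃ C : ℝ, 0 < C ∧
      ∀ (n : ℕ), 2 ≤ n →
      ∀ Q : Matrix (Fin n) (Fin n) ℝ,
        (∀ i j, 0 ≤ Q i j) →
        (∀ i, ∑ j, Q i j ≤ 1) →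
        ∀ δ m : ℝ, 0 < δ → δ ≤ 1 → 0 < m → m ≤ n →
        (∀ x : Fin n → ℝ,
          Real.sqrt (∑ i, (Q.mulVec x) i ^ 2) ≤
            (1 - δ * m / n) * Real.sqrt (∑ i, x i ^ 2)) →
        (∀ (t : ℕ) (s x : Fin n), (Q ^ t) s x ≤ 1 / n + (1 - δ) ^ t) →
        ∀ s : Fin n,
          ∑' t : ℕ, ∑ x, (Q ^ t) s x ≤ C * (Real.log n / δ + n / (δ * m)) := by
  refine ⟨3, by norm_num, ?_⟩
  intro n hn Q hQnn hQrow δ m hδ hδ1 hm hmn hnorm hent s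
  have hn0 : (0:ℝ) < n := by
    have : (2:ℝ) ≤ n := by exact_mod_cast hn
    linarith
  set α : ℝ := δ * m / n with hα
  have hα0 : 0 < α := by positivity
  have hα1 : α ≤ 1 := by
    rw [hα, div_le_one hn0]
    nlinarith
  have h1α : 0 ≤ 1 - α := by linarith
  have h1αlt : 1 - α < 1 := by linarith
  -- nonnegativity of entries of powers
  have hpownn : ∀ t : ℕ, ∀ i j, 0 ≤ (Q ^ t) i j := by
    intro t
    induction t with
    | zero =>
      intro i j
      simp only [pow_zero, Matrix.one_apply]
      split <;> norm_num
    | succ t ih =>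
      intro i j
      rw [pow_succ, Matrix.mul_apply]
      exact Finset.sum_nonneg fun y _ => mul_nonneg (ih i y) (hQnn y j)
  -- row sums of powers are at most 1
  have hrow : ∀ t : ℕ, ∀ i, ∑ j, (Q ^ t) i j ≤ 1 := by
    intro t
    induction t with
    | zero =>
      intro i
      simp [Matrix.one_apply]
    | succ t ih =>
      intro i
      rw [pow_succ']
      calc ∑ j, (Q * Q ^ t) i j = ∑ y, Q i y * ∑ j, (Q ^ t) y j := by
            simp only [Matrix.mul_apply, Finset.mul_sum]
            rw [Finset.sum_comm]
        _ ≤ ∑ y, Q i y * 1 := Finset.sum_le_sum fun y _ =>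
            mul_le_mul_of_nonneg_left (ih y) (hQnn i y)
        _ ≤ 1 := by simpa using hQrow i
  -- iterated norm bound
  have hnormpow : ∀ (t : ℕ) (v : Fin n → ℝ),
      Real.sqrt (∑ i, ((Q ^ t).mulVec v) i ^ 2) ≤
        (1 - α) ^ t * Real.sqrt (∑ i, v i ^ 2) := by
    intro t
    induction t with
    | zero =>
      intro v
      simp [Matrix.one_mulVec]
    | succ t ih =>
      intro v
      have hrw : (Q ^ (t + 1)).mulVec v = Q.mulVec ((Q ^ t).mulVec v) := by
        rw [pow_succ', Matrix.mulVec_mulVec]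
      rw [hrw]
      calc Real.sqrt (∑ i, (Q.mulVec ((Q ^ t).mulVec v)) i ^ 2)
          ≤ (1 - α) * Real.sqrt (∑ i, ((Q ^ t).mulVec v) i ^ 2) := hnorm _
        _ ≤ (1 - α) * ((1 - α) ^ t * Real.sqrt (∑ i, v i ^ 2)) :=
            mul_le_mul_of_nonneg_left (ih v) h1α
        _ = (1 - α) ^ (t + 1) * Real.sqrt (∑ i, v i ^ 2) := by ring
  -- total mass bound
  have hrsum : ∀ t : ℕ, ∑ y, ∑ x, (Q ^ t) y x ≤ n * (1 - α) ^ t := by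
    intro t
    set v : Fin n → ℝ := (Q ^ t).mulVec (fun _ => 1) with hv
    have hve : ∀ y, v y = ∑ x, (Q ^ t) y x := by
      intro y; simp [hv, Matrix.mulVec, dotProduct]
    have hsq : ∑ y, v y ^ 2 ≤ ((1 - α) ^ t) ^ 2 * n := by
      have h1 := hnormpow t (fun _ => 1)
      have h2 : Real.sqrt (∑ i : Fin n, (1:ℝ) ^ 2) = Real.sqrt n := by
        norm_num
      rw [h2] at h1
      have h3 : (0:ℝ) ≤ ∑ y, v y ^ 2 := Finset.sum_nonneg fun y _ => sq_nonneg _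
      have h4 := Real.sq_sqrt h3
      nlinarith [Real.sqrt_nonneg (∑ i, v i ^ 2), Real.sq_sqrt hn0.le,
        Real.sqrt_nonneg (n:ℝ), sq_nonneg ((1 - α) ^ t), pow_nonneg h1α t]
    have hcs : (∑ y, v y) ^ 2 ≤ (n : ℝ) * ∑ y, v y ^ 2 := by
      have := sq_sum_le_card_mul_sum_sq (s := (Finset.univ : Finset (Fin n))) (f := v)
      simpa using this
    have hvnn : 0 ≤ ∑ y, v y := by
      rw [Finset.sum_congr rfl fun y _ => hve y]
      exact Finset.sum_nonneg fun y _ =>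
        Finset.sum_nonneg fun x _ => hpownn t y x
    have hfinal : ∑ y, v y ≤ n * (1 - α) ^ t := by
      have hb : (0:ℝ) ≤ n * (1 - α) ^ t := by positivity
      have hsq2 : (∑ y, v y) ^ 2 ≤ (n * (1 - α) ^ t) ^ 2 := by nlinarith
      nlinarith
    calc ∑ y, ∑ x, (Q ^ t) y x = ∑ y, v y := by
          exact (Finset.sum_congr rfl fun y _ => (hve y).symm)
      _ ≤ n * (1 - α) ^ t := hfinal
  -- the cutoff time
  set T : ℕ := ⌈Real.log n / δ⌉₊ with hT
  have hlognn : 0 ≤ Real.log n / δ := by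
    apply div_nonneg _ hδ.le
    apply Real.log_nonneg
    exact_mod_cast (by omega : 1 ≤ n)
  have hTle : (T : ℝ) ≤ Real.log n / δ + 1 := (Nat.ceil_lt_add_one hlognn).le
  have hTge : Real.log n / δ ≤ T := Nat.le_ceil _
  have h1δ : 0 ≤ 1 - δ := by linarith
  -- (1-δ)^T ≤ 1/n
  have hdecay : (1 - δ) ^ T ≤ 1 / n := by
    have he : (1 - δ) ≤ Real.exp (-δ) := by
      have := Real.add_one_le_exp (-δ); linarith
    calc (1 - δ) ^ T ≤ (Real.exp (-δ)) ^ T := pow_le_pow_left₀ h1δ he T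
      _ = Real.exp ((-δ) * T) := by rw [← Real.exp_nat_mul]; ring_nf
      _ ≤ Real.exp (-Real.log n) := by
        apply Real.exp_le_exp.2
        have : Real.log n ≤ δ * T := by
          have := mul_le_mul_of_nonneg_left hTge hδ.le
          calc Real.log n = δ * (Real.log n / δ) := by field_simp
            _ ≤ δ * T := this
        linarith
      _ = 1 / n := by rw [Real.exp_neg, Real.exp_log hn0, one_div]
  have hent2 : ∀ y, (Q ^ T) s y ≤ 2 / n := by
    intro y
    have := hent T s y
    have h2 : (Q ^ T) s y ≤ 1 / n + 1 / n := by linarith [hdecay]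
    have h3 : (1:ℝ) / n + 1 / n = 2 / n := by ring
    linarith [h2, h3.le]
  -- tail bound
  have htail : ∀ t : ℕ, ∑ x, (Q ^ (T + t)) s x ≤ 2 * (1 - α) ^ t := by
    intro t
    have hdecomp : ∑ x, (Q ^ (T + t)) s x = ∑ y, (Q ^ T) s y * ∑ x, (Q ^ t) y x := by
      rw [pow_add]
      simp only [Matrix.mul_apply, Finset.mul_sum]
      rw [Finset.sum_comm]
    rw [hdecomp]
    calc ∑ y, (Q ^ T) s y * ∑ x, (Q ^ t) y x
        ≤ ∑ y, (2 / n) * ∑ x, (Q ^ t) y x := Finset.sum_le_sum fun y _ =>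
          mul_le_mul_of_nonneg_right (hent2 y)
            (Finset.sum_nonneg fun x _ => hpownn t y x)
      _ = (2 / n) * ∑ y, ∑ x, (Q ^ t) y x := by rw [Finset.mul_sum]
      _ ≤ (2 / n) * (n * (1 - α) ^ t) :=
          mul_le_mul_of_nonneg_left (hrsum t) (by positivity)
      _ = 2 * (1 - α) ^ t := by field_simp
  set f : ℕ → ℝ := fun t => ∑ x, (Q ^ t) s x with hf
  have hf0 : ∀ t, 0 ≤ f t := fun t => Finset.sum_nonneg fun x _ => hpownn t s x
  have hgsum : Summable (fun t : ℕ => 2 * (1 - α) ^ t) :=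
    (summable_geometric_of_lt_one h1α h1αlt).mul_left 2
  have hsum : Summable f := by
    rw [← summable_nat_add_iff T]
    exact Summable.of_nonneg_of_le (fun t => hf0 _)
      (fun t => by simpa [add_comm] using htail t) hgsum
  have hsum' : Summable (fun t => f (t + T)) := (summable_nat_add_iff T).2 hsum
  have hsplit := (Summable.sum_add_tsum_nat_add T hsum).symm
  have hhead : ∑ t ∈ Finset.range T, f t ≤ T := by
    calc ∑ t ∈ Finset.range T, f t ≤ ∑ t ∈ Finset.range T, 1 :=
        Finset.sum_le_sum fun t _ => hrow t s
      _ = T := by simp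
  have htsum_tail : ∑' t, f (t + T) ≤ 2 * (1 - (1 - α))⁻¹ := by
    calc ∑' t, f (t + T) ≤ ∑' t : ℕ, 2 * (1 - α) ^ t :=
        Summable.tsum_le_tsum (fun t => by simpa [add_comm] using htail t) hsum' hgsum
      _ = 2 * (1 - (1 - α))⁻¹ := by
        rw [tsum_mul_left, tsum_geometric_of_lt_one h1α h1αlt]
  have hαinv : (1 - (1 - α))⁻¹ = n / (δ * m) := by
    rw [hα]
    field_simp
    ring
  have hge1 : 1 ≤ (n:ℝ) / (δ * m) := by
    rw [le_div_iff₀ (by positivity)]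
    nlinarith
  calc ∑' t, f t = ∑ t ∈ Finset.range T, f t + ∑' t, f (t + T) := hsplit
    _ ≤ (T : ℝ) + 2 * (n / (δ * m)) := by
        rw [← hαinv]
        exact add_le_add hhead htsum_tail
    _ ≤ (Real.log n / δ + 1) + 2 * (n / (δ * m)) := by linarith
    _ ≤ 3 * (Real.log n / δ + n / (δ * m)) := by nlinarith
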